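/- arXiv:0812.3146 — 2 statements merged into one kernel-verified Lean document; each statement's English description precedes it below -/
import Mathlib

section
/- Let α > −1 and β > −1 be real numbers, M ≥ 1 an integer and 0 ≤ k ≤ M−1. Then, as an identity of polynomials in the real variable x: x·Q_k(x−1; α, β, M−1) + (M−x)·Q_k(x; α, β, M−1) = M·Q_k(x; α, β, M). -/
open Finset

/-- Pochhammer symbol `(a)_j = a(a+1)⋯(a+j−1)`. -/
noncomputable def poch (a : ℝ) (j : ℕ) : ℝ := ∏ m ∈ Finset.range j, (a + m)

/-- Hahn polynomial
`Q_k(x; α, β, M) = Σ_{j=0}^{k} (−k)_j (−x)_j (k+α+β+1)_j / ((−M)_j (α+1)_j j!)`. -/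
noncomputable def hahnQ (k : ℕ) (α β : ℝ) (M : ℕ) (x : ℝ) : ℝ :=
  ∑ j ∈ Finset.range (k + 1),
    poch (-(k : ℝ)) j * poch (-x) j * poch ((k : ℝ) + α + β + 1) j
      / (poch (-(M : ℝ)) j * poch (α + 1) j * (Nat.factorial j : ℝ))

lemma poch_succ (a : ℝ) (j : ℕ) : poch a (j + 1) = poch a j * (a + j) := by
  simp [poch, Finset.prod_range_succ]

lemma poch_succ' (a : ℝ) (j : ℕ) : poch a (j + 1) = a * poch (a + 1) j := by
  rw [poch, Finset.prod_range_succ', poch]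
  push_cast
  rw [add_zero, mul_comm]
  congr 1
  apply Finset.prod_congr rfl
  intro m _
  ring

lemma poch_pos (a : ℝ) (ha : 0 < a) (j : ℕ) : 0 < poch a j := by
  apply Finset.prod_pos
  intro m _
  positivity

lemma poch_neg_nat_ne (N j : ℕ) (h : j ≤ N) : poch (-(N : ℝ)) j ≠ 0 := by
  apply Finset.prod_ne_zero_iff.mpr
  intro m hm
  have hm' : (m : ℝ) < N := by
    exact_mod_cast lt_of_lt_of_le (Finset.mem_range.mp hm) h
  intro hz
  nlinarith

lemma key (μ x : ℝ) (j : ℕ) :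
    x * poch (1 - x) j * poch (-μ) j + (μ - x) * poch (-x) j * poch (-μ) j
      = μ * poch (-x) j * poch (1 - μ) j := by
  cases j with
  | zero => simp [poch]
  | succ i =>
      have h1 : poch (-μ) (i + 1) = -μ * poch (1 - μ) i := by
        rw [poch_succ']; ring_nf
      have h2 : poch (1 - μ) (i + 1) = poch (1 - μ) i * (1 - μ + i) := poch_succ _ _
      have h3 : poch (-x) (i + 1) = -x * poch (1 - x) i := by
        rw [poch_succ']; ring_nf
      have h4 : poch (1 - x) (i + 1) = poch (1 - x) i * (1 - x + i) := poch_succ _ _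
      rw [h1, h2, h3, h4]
      ring

/-- the recurrence relation for Hahn polynomials:
`x·Q_k(x−1; α, β, M−1) + (M−x)·Q_k(x; α, β, M−1) = M·Q_k(x; α, β, M)`
as an identity in the real variable `x`. -/
theorem hahn_recurrence (α β : ℝ) (hα : α > -1) (hβ : β > -1)
    (M k : ℕ) (hM : 1 ≤ M) (hk : k ≤ M - 1) :
    ∀ x : ℝ, x * hahnQ k α β (M - 1) (x - 1) + ((M : ℝ) - x) * hahnQ k α β (M - 1) x
      = (M : ℝ) * hahnQ k α β M x := by
  intro x
  unfold hahnQ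
  rw [Finset.mul_sum, Finset.mul_sum, Finset.mul_sum, ← Finset.sum_add_distrib]
  apply Finset.sum_congr rfl
  intro j hj
  have hjk : j ≤ k := Nat.lt_succ_iff.mp (Finset.mem_range.mp hj)
  have hjM1 : j ≤ M - 1 := le_trans hjk hk
  have hjM : j ≤ M := le_trans hjM1 (Nat.sub_le _ _)
  have hS1 : poch (-((M - 1 : ℕ) : ℝ)) j ≠ 0 := poch_neg_nat_ne _ _ hjM1
  have hS2 : poch (-(M : ℝ)) j ≠ 0 := poch_neg_nat_ne _ _ hjM
  have hT : poch (α + 1) j ≠ 0 := ne_of_gt (poch_pos _ (by linarith) _)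
  have hF : (Nat.factorial j : ℝ) ≠ 0 := Nat.cast_ne_zero.mpr (Nat.factorial_ne_zero j)
  have hcast : ((M - 1 : ℕ) : ℝ) = (M : ℝ) - 1 := by
    push_cast [hM]; ring
  have hxx : (-(x - 1)) = 1 - x := by ring
  have hmm : (-((M : ℝ) - 1)) = 1 - (M : ℝ) := by ring
  rw [hcast, hxx, hmm]
  have hS1' : poch (1 - (M : ℝ)) j ≠ 0 := by rw [← hmm, ← hcast]; exact hS1
  have hkey := key (M : ℝ) x j
  field_simp
  linear_combination (poch (-(k : ℝ)) j * poch ((k : ℝ) + α + β + 1) j) * hkey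
end

section
/- Let p ≥ 1 be an integer and a, b, c real numbers. Define the differential operator G = ∑_{i=1}^{p} [(x_i² + a·x_i + b)·∂²/∂x_i² + (−(2/3)(p−2)·x_i + c)·∂/∂x_i]. Then G applied to the Vandermonde polynomial V(x_1,…,x_p) = ∏_{1 ≤ i < j ≤ p}(x_j − x_i) is identically zero: G V = 0. -/
open Finset

/-- The Vandermonde polynomial `V(x_1,…,x_p) = ∏_{1 ≤ i < j ≤ p}(x_j − x_i)`. -/
noncomputable def vandR (p : ℕ) (x : Fin p → ℝ) : ℝ :=
  ∏ i : Fin p, ∏ j ∈ Finset.univ.filter (fun j : Fin p => i < j), (x j - x i)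


/-- set of ordered pairs `i < j`. -/
def pr (p : ℕ) : Finset (Fin p × Fin p) :=
  Finset.univ.filter (fun q => q.1 < q.2)

/-- the canonical ordered pair on `{i,j}`. -/
def pe {p : ℕ} (i j : Fin p) : Fin p × Fin p := if i < j then (i, j) else (j, i)

lemma vandR_pairs (p : ℕ) (x : Fin p → ℝ) :
    vandR p x = ∏ q ∈ pr p, (x q.2 - x q.1) := by
  rw [pr, vandR]
  rw [Finset.prod_filter]
  rw [Fintype.prod_prod_type]
  refine Finset.prod_congr rfl fun i _ => ?_
  rw [Finset.prod_filter]

lemma pe_mem_pr {p : ℕ} {i j : Fin p} (h : i ≠ j) : pe i j ∈ pr p := by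
  rcases lt_or_gt_of_ne h with hl | hl <;>
    simp [pe, pr, hl, not_lt_of_gt hl]

lemma pe_comm {p : ℕ} {i j : Fin p} (h : i ≠ j) : pe i j = pe j i := by
  rcases lt_or_gt_of_ne h with hl | hl <;> simp [pe, hl, not_lt_of_gt hl]

lemma split_in {p : ℕ} (g : Fin p × Fin p → ℝ) (s : Finset (Fin p)) {i : Fin p} (hi : i ∈ s) :
    ∏ q ∈ (pr p).filter (fun q => q.1 ∈ s ∧ q.2 ∈ s), g q
      = (∏ q ∈ (pr p).filter (fun q => q.1 ∈ s.erase i ∧ q.2 ∈ s.erase i), g q)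
        * ∏ j ∈ s.erase i, g (pe i j) := by
  have hset : (pr p).filter (fun q => q.1 ∈ s ∧ q.2 ∈ s)
      = (pr p).filter (fun q => q.1 ∈ s.erase i ∧ q.2 ∈ s.erase i)
        ∪ (pr p).filter (fun q => (q.1 = i ∧ q.2 ∈ s.erase i) ∨ (q.2 = i ∧ q.1 ∈ s.erase i)) := by
    rw [← Finset.filter_or]
    refine Finset.filter_congr fun q hq => ?_
    have hne : q.1 ≠ q.2 := by
      have : q.1 < q.2 := by simpa [pr] using hq
      exact ne_of_lt this
    simp only [Finset.mem_erase]
    constructor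
    · rintro ⟨h1, h2⟩
      by_cases e1 : q.1 = i
      · exact Or.inr (Or.inl ⟨e1, by rw [← e1]; exact hne.symm, h2⟩)
      · by_cases e2 : q.2 = i
        · exact Or.inr (Or.inr ⟨e2, by rw [← e2]; exact hne, h1⟩)
        · exact Or.inl ⟨⟨e1, h1⟩, ⟨e2, h2⟩⟩
    · rintro (⟨⟨_, h1⟩, ⟨_, h2⟩⟩ | ⟨e1, _, h2⟩ | ⟨e2, _, h1⟩)
      · exact ⟨h1, h2⟩
      · exact ⟨e1 ▸ hi, h2⟩
      · exact ⟨h1, e2 ▸ hi⟩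
  have hdisj : Disjoint ((pr p).filter (fun q => q.1 ∈ s.erase i ∧ q.2 ∈ s.erase i))
      ((pr p).filter (fun q => (q.1 = i ∧ q.2 ∈ s.erase i) ∨ (q.2 = i ∧ q.1 ∈ s.erase i))) := by
    rw [Finset.disjoint_left]
    intro q hq1 hq2
    simp only [Finset.mem_filter, Finset.mem_erase] at hq1 hq2
    rcases hq2.2 with ⟨e1, _⟩ | ⟨e2, _⟩
    · exact hq1.2.1.1 e1
    · exact hq1.2.2.1 e2
  rw [hset, Finset.prod_union hdisj]
  congr 1
  refine Finset.prod_nbij' (fun q => if q.1 = i then q.2 else q.1) (fun j => pe i j)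
    ?_ ?_ ?_ ?_ ?_
  · intro q hq
    simp only [Finset.mem_filter] at hq
    rcases hq.2 with ⟨e1, h2⟩ | ⟨e2, h1⟩
    · simpa [e1] using h2
    · have : q.1 ≠ i := (Finset.mem_erase.mp h1).1
      simpa [this] using h1
  · intro j hj
    have hji : j ≠ i := (Finset.mem_erase.mp hj).1
    simp only [Finset.mem_filter]
    refine ⟨pe_mem_pr hji.symm, ?_⟩
    by_cases h : i < j
    · exact Or.inl ⟨by simp [pe, h], by simp [pe, h]; exact Finset.mem_erase.mp hj⟩
    · exact Or.inr ⟨by simp [pe, h], by simp [pe, h]; exact Finset.mem_erase.mp hj⟩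
  · intro q hq
    simp only [Finset.mem_filter] at hq
    have hlt : q.1 < q.2 := by simpa [pr] using hq.1
    rcases hq.2 with ⟨e1, h2⟩ | ⟨e2, h1⟩
    · rw [if_pos e1, pe, if_pos (e1 ▸ hlt), ← e1, Prod.mk.eta]
    · have hne : q.1 ≠ i := (Finset.mem_erase.mp h1).1
      have hni : ¬ i < q.1 := by rw [← e2]; exact not_lt_of_gt hlt
      rw [if_neg hne, pe, if_neg hni, ← e2, Prod.mk.eta]
  · intro j hj
    have hji : j ≠ i := (Finset.mem_erase.mp hj).1
    by_cases h : i < j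
    · simp [pe, h, ne_of_gt h]
    · simp [pe, h, hji]
  · intro q hq
    simp only [Finset.mem_filter] at hq
    have hlt : q.1 < q.2 := by simpa [pr] using hq.1
    rcases hq.2 with ⟨e1, h2⟩ | ⟨e2, h1⟩
    · rw [if_pos e1, pe, if_pos (e1 ▸ hlt), ← e1, Prod.mk.eta]
    · have hne : q.1 ≠ i := (Finset.mem_erase.mp h1).1
      have hni : ¬ i < q.1 := by rw [← e2]; exact not_lt_of_gt hlt
      rw [if_neg hne, pe, if_neg hni, ← e2, Prod.mk.eta]

/-- signed difference factor -/
def wd {p : ℕ} (x : Fin p → ℝ) (i j : Fin p) : ℝ := if i < j then x j - x i else x i - x j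

/-- sign -/
def eps {p : ℕ} (i j : Fin p) : ℝ := if i < j then -1 else 1

lemma D_pe {p : ℕ} (x : Fin p → ℝ) (i j : Fin p) :
    x (pe i j).2 - x (pe i j).1 = wd x i j := by
  by_cases h : i < j <;> simp [pe, wd, h]

lemma wd_comm {p : ℕ} (x : Fin p → ℝ) (i j : Fin p) : wd x i j = wd x j i := by
  rcases lt_trichotomy i j with h | h | h
  · simp [wd, h, not_lt_of_gt h]
  · simp [wd, h]
  · simp [wd, h, not_lt_of_gt h]

lemma eps_mul_wd {p : ℕ} (x : Fin p → ℝ) (i j : Fin p) :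
    eps i j * wd x i j = x i - x j := by
  by_cases h : i < j <;> simp [eps, wd, h] <;> ring

lemma eps_anti {p : ℕ} {i j : Fin p} (h : i ≠ j) : eps j i = - eps i j := by
  rcases lt_or_gt_of_ne h with hl | hl <;> simp [eps, hl, not_lt_of_gt hl]

lemma eps_sq {p : ℕ} (i j : Fin p) : eps i j * eps i j = 1 := by
  by_cases h : i < j <;> simp [eps, h]

/-- product of `x_l - x_k` over pairs `k < l` inside `s` -/
noncomputable def CC (p : ℕ) (x : Fin p → ℝ) (s : Finset (Fin p)) : ℝ :=
  ∏ q ∈ (pr p).filter (fun q => q.1 ∈ s ∧ q.2 ∈ s), (x q.2 - x q.1)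

lemma CC_univ (p : ℕ) (x : Fin p → ℝ) : vandR p x = CC p x Finset.univ := by
  rw [vandR_pairs, CC, Finset.filter_true_of_mem (fun q _ => ⟨Finset.mem_univ _, Finset.mem_univ _⟩)]

lemma CC_split (p : ℕ) (x : Fin p → ℝ) (s : Finset (Fin p)) {i : Fin p} (hi : i ∈ s) :
    CC p x s = CC p x (s.erase i) * ∏ j ∈ s.erase i, wd x i j := by
  rw [CC, split_in (fun q => x q.2 - x q.1) s hi]
  rw [show (CC p x (s.erase i)) = _ from rfl]
  congr 1
  exact Finset.prod_congr rfl fun j _ => D_pe x i j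

open Polynomial in
/-- the linear factor of the Vandermonde seen as polynomial in coordinate `i` -/
noncomputable def sig {p : ℕ} (x : Fin p → ℝ) (i j : Fin p) : Polynomial ℝ :=
  if i < j then C (x j) - X else X - C (x j)

open Polynomial in
noncomputable def QQ (p : ℕ) (x : Fin p → ℝ) (i : Fin p) : Polynomial ℝ :=
  C (CC p x (Finset.univ.erase i)) * ∏ j ∈ Finset.univ.erase i, sig x i j

lemma sig_eval {p : ℕ} (x : Fin p → ℝ) (i j : Fin p) (t : ℝ) :
    (sig x i j).eval t = if i < j then x j - t else t - x j := by
  by_cases h : i < j <;> simp [sig, h]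

lemma sig_eval_self {p : ℕ} (x : Fin p → ℝ) (i j : Fin p) :
    (sig x i j).eval (x i) = wd x i j := by
  rw [sig_eval, wd]

open Polynomial in
lemma sig_deriv {p : ℕ} (x : Fin p → ℝ) (i j : Fin p) :
    (sig x i j).derivative = C (eps i j) := by
  by_cases h : i < j <;> simp [sig, eps, h]

lemma update_eval (p : ℕ) (x : Fin p → ℝ) (i : Fin p) (t : ℝ) :
    vandR p (Function.update x i t) = (QQ p x i).eval t := by
  have hsplit := split_in (fun q => Function.update x i t q.2 - Function.update x i t q.1)
    Finset.univ (Finset.mem_univ i)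
  rw [Finset.filter_true_of_mem (fun q _ => ⟨Finset.mem_univ _, Finset.mem_univ _⟩)] at hsplit
  rw [vandR_pairs, hsplit]
  rw [QQ, Polynomial.eval_mul, Polynomial.eval_C, Polynomial.eval_prod]
  congr 1
  · rw [CC]
    refine Finset.prod_congr rfl fun q hq => ?_
    simp only [Finset.mem_filter, Finset.mem_erase] at hq
    rw [Function.update_of_ne hq.2.1.1, Function.update_of_ne hq.2.2.1]
  · refine Finset.prod_congr rfl fun j hj => ?_
    have hji : j ≠ i := (Finset.mem_erase.mp hj).1
    rw [sig_eval]
    dsimp only [pe]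
    by_cases h : i < j
    · rw [if_pos h]
      show Function.update x i t j - Function.update x i t i = _
      rw [Function.update_of_ne (ne_of_gt h), Function.update_self, if_pos h]
    · rw [if_neg h]
      show Function.update x i t i - Function.update x i t j = _
      rw [Function.update_of_ne hji, Function.update_self, if_neg h]

open Polynomial in
lemma derivative_finset_prod {ι : Type*} [DecidableEq ι] (s : Finset ι) (f : ι → Polynomial ℝ) :
    derivative (∏ j ∈ s, f j) = ∑ j ∈ s, (∏ k ∈ s.erase j, f k) * derivative (f j) := by
  induction s using Finset.induction_on with
  | empty => simp
  | insert _ _ ha ih =>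
    rename_i a s
    rw [Finset.prod_insert ha, derivative_mul, ih, Finset.sum_insert ha,
      Finset.erase_insert ha, Finset.mul_sum]
    have key : ∀ j ∈ s, f a * ((∏ k ∈ s.erase j, f k) * derivative (f j))
        = (∏ k ∈ (insert a s).erase j, f k) * derivative (f j) := by
      intro j hj
      have hja : a ≠ j := fun h => ha (h ▸ hj)
      rw [Finset.erase_insert_of_ne hja,
        Finset.prod_insert (fun h => ha (Finset.mem_of_mem_erase h))]
      ring
    rw [Finset.sum_congr rfl key]
    ring

lemma deriv_vand (p : ℕ) (x : Fin p → ℝ) (i : Fin p) :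
    deriv (fun t => vandR p (Function.update x i t)) (x i)
      = ∑ j ∈ Finset.univ.erase i, eps i j *
          (CC p x (Finset.univ.erase i) * ∏ k ∈ (Finset.univ.erase i).erase j, wd x i k) := by
  have hf : (fun t => vandR p (Function.update x i t)) = fun t => (QQ p x i).eval t :=
    funext (update_eval p x i)
  rw [hf, Polynomial.deriv, QQ, Polynomial.derivative_C_mul, derivative_finset_prod]
  simp only [Polynomial.eval_mul, Polynomial.eval_C, Polynomial.eval_finset_sum,
    Polynomial.eval_prod, sig_deriv, sig_eval_self]
  rw [Finset.mul_sum]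
  refine Finset.sum_congr rfl fun j hj => ?_
  ring

lemma deriv2_vand (p : ℕ) (x : Fin p → ℝ) (i : Fin p) :
    iteratedDeriv 2 (fun t => vandR p (Function.update x i t)) (x i)
      = ∑ j ∈ Finset.univ.erase i, ∑ k ∈ (Finset.univ.erase i).erase j,
          (eps i j * eps i k) *
          (CC p x (Finset.univ.erase i)
            * ∏ l ∈ ((Finset.univ.erase i).erase j).erase k, wd x i l) := by
  have hf : (fun t => vandR p (Function.update x i t)) = fun t => (QQ p x i).eval t :=
    funext (update_eval p x i)
  have h2 : iteratedDeriv 2 (fun t => (QQ p x i).eval t)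
      = fun t => ((QQ p x i).derivative.derivative).eval t := by
    rw [show (2 : ℕ) = 1 + 1 from rfl, iteratedDeriv_succ, iteratedDeriv_one]
    have h1 : deriv (fun t => (QQ p x i).eval t) = fun t => ((QQ p x i).derivative).eval t :=
      funext fun t => Polynomial.deriv _
    rw [h1]
    exact funext fun t => Polynomial.deriv _
  rw [hf, h2]
  rw [QQ, Polynomial.derivative_C_mul, derivative_finset_prod, Finset.mul_sum, map_sum]
  simp only [Polynomial.derivative_C_mul, Polynomial.derivative_mul, sig_deriv,
    Polynomial.derivative_C, mul_zero, add_zero, zero_mul, zero_add, derivative_finset_prod,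
    Finset.sum_mul, Finset.mul_sum, Polynomial.eval_finset_sum, Polynomial.eval_add,
    Polynomial.eval_mul, Polynomial.eval_C, Polynomial.eval_prod, sig_eval_self]
  refine Finset.sum_congr rfl fun j hj => Finset.sum_congr rfl fun k hk => ?_
  ring

noncomputable def BB (p : ℕ) (x : Fin p → ℝ) (i j : Fin p) : ℝ :=
  CC p x ((Finset.univ.erase i).erase j)
    * ∏ k ∈ (Finset.univ.erase i).erase j, (wd x i k * wd x j k)

lemma BB_eq (p : ℕ) (x : Fin p → ℝ) {i j : Fin p} (h : i ≠ j) :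
    CC p x (Finset.univ.erase i) * ∏ k ∈ (Finset.univ.erase i).erase j, wd x i k
      = BB p x i j := by
  have hj : j ∈ Finset.univ.erase i := Finset.mem_erase.mpr ⟨h.symm, Finset.mem_univ j⟩
  rw [CC_split p x (Finset.univ.erase i) hj, BB, Finset.prod_mul_distrib]
  ring

lemma BB_symm (p : ℕ) (x : Fin p → ℝ) (i j : Fin p) : BB p x i j = BB p x j i := by
  rw [BB, BB, Finset.erase_right_comm]
  congr 1
  exact Finset.prod_congr rfl fun k _ => mul_comm _ _

lemma R1 (p : ℕ) (x : Fin p → ℝ) {i j : Fin p} (h : i ≠ j) :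
    BB p x i j * wd x i j = vandR p x := by
  have hj : j ∈ Finset.univ.erase i := Finset.mem_erase.mpr ⟨h.symm, Finset.mem_univ j⟩
  rw [← BB_eq p x h, mul_assoc, Finset.prod_erase_mul _ _ hj,
    ← CC_split p x Finset.univ (Finset.mem_univ i), ← CC_univ]

noncomputable def UU (p : ℕ) (x : Fin p → ℝ) (i j k : Fin p) : ℝ :=
  CC p x (((Finset.univ.erase i).erase j).erase k)
    * ∏ l ∈ ((Finset.univ.erase i).erase j).erase k, (wd x i l * wd x j l * wd x k l)

lemma UU_eq (p : ℕ) (x : Fin p → ℝ) {i j k : Fin p}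
    (hij : i ≠ j) (hik : i ≠ k) (hjk : j ≠ k) :
    CC p x (Finset.univ.erase i) * ∏ l ∈ ((Finset.univ.erase i).erase j).erase k, wd x i l
      = UU p x i j k * wd x j k := by
  have hj : j ∈ Finset.univ.erase i := Finset.mem_erase.mpr ⟨hij.symm, Finset.mem_univ j⟩
  have hk : k ∈ (Finset.univ.erase i).erase j :=
    Finset.mem_erase.mpr ⟨hjk.symm, Finset.mem_erase.mpr ⟨hik.symm, Finset.mem_univ k⟩⟩
  rw [CC_split p x (Finset.univ.erase i) hj,
    CC_split p x ((Finset.univ.erase i).erase j) hk,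
    ← Finset.mul_prod_erase _ _ hk, UU]
  simp only [Finset.prod_mul_distrib]
  ring

lemma UU_symm1 (p : ℕ) (x : Fin p → ℝ) (i j k : Fin p) : UU p x i j k = UU p x j i k := by
  rw [UU, UU, Finset.erase_right_comm (a := i) (b := j)]
  congr 1
  exact Finset.prod_congr rfl fun l _ => by ring

lemma UU_symm2 (p : ℕ) (x : Fin p → ℝ) (i j k : Fin p) : UU p x i j k = UU p x i k j := by
  rw [UU, UU, Finset.erase_right_comm (a := j) (b := k)]
  congr 1
  exact Finset.prod_congr rfl fun l _ => by ring

lemma R2 (p : ℕ) (x : Fin p → ℝ) {i j k : Fin p}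
    (hij : i ≠ j) (hik : i ≠ k) (hjk : j ≠ k) :
    UU p x i j k * (wd x i j * wd x i k * wd x j k) = vandR p x := by
  have hj : j ∈ Finset.univ.erase i := Finset.mem_erase.mpr ⟨hij.symm, Finset.mem_univ j⟩
  have hk : k ∈ (Finset.univ.erase i).erase j :=
    Finset.mem_erase.mpr ⟨hjk.symm, Finset.mem_erase.mpr ⟨hik.symm, Finset.mem_univ k⟩⟩
  have h1 : UU p x i j k * wd x j k
      = CC p x (Finset.univ.erase i) * ∏ l ∈ ((Finset.univ.erase i).erase j).erase k, wd x i l :=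
    (UU_eq p x hij hik hjk).symm
  calc UU p x i j k * (wd x i j * wd x i k * wd x j k)
      = (UU p x i j k * wd x j k) * wd x i k * wd x i j := by ring
    _ = CC p x (Finset.univ.erase i)
        * ((∏ l ∈ ((Finset.univ.erase i).erase j).erase k, wd x i l) * wd x i k) * wd x i j := by
        rw [h1]; ring
    _ = CC p x (Finset.univ.erase i)
        * ((∏ l ∈ (Finset.univ.erase i).erase j, wd x i l) * wd x i j) := by
        rw [Finset.prod_erase_mul _ _ hk]; ring
    _ = CC p x (Finset.univ.erase i) * ∏ l ∈ Finset.univ.erase i, wd x i l := by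
        rw [Finset.prod_erase_mul _ _ hj]
    _ = vandR p x := by
        rw [← CC_split p x Finset.univ (Finset.mem_univ i), ← CC_univ]

/-- ordered distinct triples -/
def T3 (p : ℕ) : Finset (Fin p × Fin p × Fin p) :=
  Finset.univ.filter (fun t => t.1 ≠ t.2.1 ∧ t.1 ≠ t.2.2 ∧ t.2.1 ≠ t.2.2)

lemma triple_sum_eq (p : ℕ) (G : Fin p → Fin p → Fin p → ℝ) :
    ∑ i : Fin p, ∑ j ∈ Finset.univ.erase i, ∑ k ∈ (Finset.univ.erase i).erase j, G i j k
      = ∑ t ∈ T3 p, G t.1 t.2.1 t.2.2 := by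
  rw [T3, Finset.sum_filter, Fintype.sum_prod_type]
  refine Finset.sum_congr rfl fun i _ => ?_
  rw [Fintype.sum_prod_type, ← Finset.filter_ne', Finset.sum_filter]
  refine Finset.sum_congr rfl fun j _ => ?_
  by_cases hji : j = i
  · simp [hji]
  · rw [if_pos hji, show ((Finset.univ.filter (· ≠ i)).erase j : Finset (Fin p))
        = Finset.univ.filter (fun k => (k ≠ i) ∧ k ≠ j) by
        rw [← Finset.filter_ne', Finset.filter_filter],
      Finset.sum_filter]
    refine Finset.sum_congr rfl fun k _ => ?_
    by_cases h1 : k = i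
    · simp [h1]
    · by_cases h2 : k = j
      · simp [h2]
      · rw [if_pos ⟨h1, h2⟩, if_pos ⟨fun h => hji h.symm, fun h => h1 h.symm, fun h => h2 h.symm⟩]

lemma T3_swap12 (p : ℕ) (G : Fin p → Fin p → Fin p → ℝ) :
    ∑ t ∈ T3 p, G t.1 t.2.1 t.2.2 = ∑ t ∈ T3 p, G t.2.1 t.1 t.2.2 := by
  refine Finset.sum_nbij' (fun t => (t.2.1, t.1, t.2.2)) (fun t => (t.2.1, t.1, t.2.2))
    ?_ ?_ ?_ ?_ ?_
  · intro t ht; simp only [T3, Finset.mem_filter, Finset.mem_univ, true_and] at ht ⊢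
    exact ⟨fun h => ht.1 h.symm, ht.2.2, ht.2.1⟩
  · intro t ht; simp only [T3, Finset.mem_filter, Finset.mem_univ, true_and] at ht ⊢
    exact ⟨fun h => ht.1 h.symm, ht.2.2, ht.2.1⟩
  · intro t _; rfl
  · intro t _; rfl
  · intro t _; rfl

lemma T3_swap13 (p : ℕ) (G : Fin p → Fin p → Fin p → ℝ) :
    ∑ t ∈ T3 p, G t.1 t.2.1 t.2.2 = ∑ t ∈ T3 p, G t.2.2 t.2.1 t.1 := by
  refine Finset.sum_nbij' (fun t => (t.2.2, t.2.1, t.1)) (fun t => (t.2.2, t.2.1, t.1))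
    ?_ ?_ ?_ ?_ ?_
  · intro t ht; simp only [T3, Finset.mem_filter, Finset.mem_univ, true_and] at ht ⊢
    exact ⟨fun h => ht.2.2 h.symm, fun h => ht.2.1 h.symm, fun h => ht.1 h.symm⟩
  · intro t ht; simp only [T3, Finset.mem_filter, Finset.mem_univ, true_and] at ht ⊢
    exact ⟨fun h => ht.2.2 h.symm, fun h => ht.2.1 h.symm, fun h => ht.1 h.symm⟩
  · intro t _; rfl
  · intro t _; rfl
  · intro t _; rfl

lemma wd_eq (p : ℕ) (x : Fin p → ℝ) (i j : Fin p) :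
    wd x i j = eps i j * (x i - x j) := by
  rw [← eps_mul_wd x i j, ← mul_assoc, eps_sq, one_mul]

lemma core (p : ℕ) (x : Fin p → ℝ) (a b : ℝ) {i j k : Fin p}
    (hij : i ≠ j) (hik : i ≠ k) (hjk : j ≠ k) :
    (x i ^ 2 + a * x i + b) * ((eps i j * eps i k) * (UU p x i j k * wd x j k))
      + (x j ^ 2 + a * x j + b) * ((eps j i * eps j k) * (UU p x j i k * wd x i k))
      + (x k ^ 2 + a * x k + b) * ((eps k j * eps k i) * (UU p x k j i * wd x j i))
      = vandR p x := by
  rw [← R2 p x hij hik hjk,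
    show UU p x j i k = UU p x i j k from (UU_symm1 p x i j k).symm,
    show UU p x k j i = UU p x i j k from by rw [UU_symm1, UU_symm2, UU_symm1],
    wd_comm x j i, eps_anti hij, eps_anti hjk, eps_anti hik,
    wd_eq p x i j, wd_eq p x i k, wd_eq p x j k]
  ring

lemma pair_part (p : ℕ) (x : Fin p → ℝ) (m c : ℝ) :
    ∑ i : Fin p, ((m * x i + c) * ∑ j ∈ Finset.univ.erase i, eps i j * BB p x i j)
      = (↑(p * (p - 1)) * (m * vandR p x)) / 2 := by
  set F : Fin p → Fin p → ℝ := fun i j => (m * x i + c) * (eps i j * BB p x i j) with hF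
  have hL : ∑ i : Fin p, ((m * x i + c) * ∑ j ∈ Finset.univ.erase i, eps i j * BB p x i j)
      = ∑ i : Fin p, ∑ j ∈ Finset.univ.erase i, F i j :=
    Finset.sum_congr rfl fun i _ => Finset.mul_sum _ _ _
  have hswap : ∑ i : Fin p, ∑ j ∈ Finset.univ.erase i, F i j
      = ∑ j : Fin p, ∑ i ∈ Finset.univ.erase j, F i j :=
    Finset.sum_comm' (fun i j => by simp [Finset.mem_erase]; tauto)
  have key : ∀ i : Fin p, ∀ j ∈ Finset.univ.erase i, F i j + F j i = m * vandR p x := by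
    intro i j hj
    have hij : i ≠ j := fun h => (Finset.mem_erase.mp hj).1 h.symm
    rw [hF]; dsimp only
    rw [show BB p x j i = BB p x i j from (BB_symm p x i j).symm, eps_anti hij,
      ← R1 p x hij, wd_eq p x i j]
    ring
  have hcount : (∑ i : Fin p, ∑ _j ∈ Finset.univ.erase i, (m * vandR p x))
      = ↑(p * (p - 1)) * (m * vandR p x) := by
    simp only [Finset.sum_const, Finset.card_erase_of_mem (Finset.mem_univ _),
      Finset.card_univ, Fintype.card_fin, nsmul_eq_mul, Nat.cast_mul]
    ring
  have h2 : 2 * (∑ i : Fin p, ∑ j ∈ Finset.univ.erase i, F i j)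
      = ↑(p * (p - 1)) * (m * vandR p x) := by
    calc 2 * (∑ i : Fin p, ∑ j ∈ Finset.univ.erase i, F i j)
        = (∑ i : Fin p, ∑ j ∈ Finset.univ.erase i, F i j)
          + (∑ j : Fin p, ∑ i ∈ Finset.univ.erase j, F i j) := by rw [← hswap]; ring
      _ = ∑ i : Fin p, ((∑ j ∈ Finset.univ.erase i, F i j) + ∑ j ∈ Finset.univ.erase i, F j i) := by
          rw [← Finset.sum_add_distrib]
      _ = ∑ i : Fin p, ∑ j ∈ Finset.univ.erase i, (F i j + F j i) := by
          exact Finset.sum_congr rfl fun i _ => (Finset.sum_add_distrib).symm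
      _ = ∑ i : Fin p, ∑ _j ∈ Finset.univ.erase i, (m * vandR p x) :=
          Finset.sum_congr rfl fun i _ => Finset.sum_congr rfl fun j hj => key i j hj
      _ = ↑(p * (p - 1)) * (m * vandR p x) := hcount
  rw [hL]
  linarith

lemma triple_part (p : ℕ) (x : Fin p → ℝ) (a b : ℝ) :
    ∑ i : Fin p, ((x i ^ 2 + a * x i + b)
        * ∑ j ∈ Finset.univ.erase i, ∑ k ∈ (Finset.univ.erase i).erase j,
            (eps i j * eps i k) * (UU p x i j k * wd x j k))
      = ↑(p * (p - 1) * (p - 2)) * vandR p x / 3 := by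
  set G : Fin p → Fin p → Fin p → ℝ := fun i j k =>
    (x i ^ 2 + a * x i + b) * ((eps i j * eps i k) * (UU p x i j k * wd x j k)) with hG
  have hL : ∑ i : Fin p, ((x i ^ 2 + a * x i + b)
        * ∑ j ∈ Finset.univ.erase i, ∑ k ∈ (Finset.univ.erase i).erase j,
            (eps i j * eps i k) * (UU p x i j k * wd x j k))
      = ∑ t ∈ T3 p, G t.1 t.2.1 t.2.2 := by
    rw [← triple_sum_eq]
    refine Finset.sum_congr rfl fun i _ => ?_
    rw [Finset.mul_sum]
    exact Finset.sum_congr rfl fun j _ => Finset.mul_sum _ _ _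
  have key : ∀ t ∈ T3 p, G t.1 t.2.1 t.2.2 + G t.2.1 t.1 t.2.2 + G t.2.2 t.2.1 t.1
      = vandR p x := by
    rintro ⟨i, j, k⟩ ht
    simp only [T3, Finset.mem_filter, Finset.mem_univ, true_and] at ht
    exact core p x a b ht.1 ht.2.1 ht.2.2
  have hcount : (∑ _t ∈ T3 p, vandR p x) = ↑(p * (p - 1) * (p - 2)) * vandR p x := by
    rw [← triple_sum_eq p (fun _ _ _ => vandR p x)]
    have hin : ∀ i : Fin p, ∀ j ∈ Finset.univ.erase i,
        (∑ _k ∈ (Finset.univ.erase i).erase j, vandR p x) = ((p - 2 : ℕ) : ℝ) * vandR p x := by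
      intro i j hj
      rw [Finset.sum_const, Finset.card_erase_of_mem hj,
        Finset.card_erase_of_mem (Finset.mem_univ _), Finset.card_univ, Fintype.card_fin,
        nsmul_eq_mul, Nat.sub_sub]
    rw [Finset.sum_congr rfl (fun i _ => Finset.sum_congr rfl (hin i))]
    simp only [Finset.sum_const, Finset.card_erase_of_mem (Finset.mem_univ _),
      Finset.card_univ, Fintype.card_fin, nsmul_eq_mul, Nat.cast_mul]
    ring
  have h3 : 3 * (∑ t ∈ T3 p, G t.1 t.2.1 t.2.2) = ↑(p * (p - 1) * (p - 2)) * vandR p x := by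
    calc 3 * (∑ t ∈ T3 p, G t.1 t.2.1 t.2.2)
        = (∑ t ∈ T3 p, G t.1 t.2.1 t.2.2) + (∑ t ∈ T3 p, G t.2.1 t.1 t.2.2)
          + (∑ t ∈ T3 p, G t.2.2 t.2.1 t.1) := by
          rw [← T3_swap12, ← T3_swap13]; ring
      _ = ∑ t ∈ T3 p, (G t.1 t.2.1 t.2.2 + G t.2.1 t.1 t.2.2 + G t.2.2 t.2.1 t.1) := by
          rw [← Finset.sum_add_distrib, ← Finset.sum_add_distrib]
      _ = ∑ _t ∈ T3 p, vandR p x := Finset.sum_congr rfl key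
      _ = ↑(p * (p - 1) * (p - 2)) * vandR p x := hcount
  rw [hL]
  linarith

/-- König–O'Connell lemma: the Vandermonde polynomial is
harmonic for `G = ∑_i [(x_i² + a·x_i + b)·∂²/∂x_i²
+ (−(2/3)(p−2)·x_i + c)·∂/∂x_i]`, i.e. `G V = 0`. -/
theorem vandermonde_harmonic (p : ℕ) (hp : 1 ≤ p) (a b c : ℝ) :
    ∀ x : Fin p → ℝ,
      ∑ i : Fin p,
        ((x i ^ 2 + a * x i + b)
            * iteratedDeriv 2 (fun t => vandR p (Function.update x i t)) (x i)
          + (-(2 / 3) * ((p : ℝ) - 2) * x i + c)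
            * deriv (fun t => vandR p (Function.update x i t)) (x i))
      = 0 := by
  intro x
  have hD1 : ∀ i : Fin p, deriv (fun t => vandR p (Function.update x i t)) (x i)
      = ∑ j ∈ Finset.univ.erase i, eps i j * BB p x i j := by
    intro i
    rw [deriv_vand]
    refine Finset.sum_congr rfl fun j hj => ?_
    have hij : i ≠ j := fun h => (Finset.mem_erase.mp hj).1 h.symm
    rw [BB_eq p x hij]
  have hD2 : ∀ i : Fin p, iteratedDeriv 2 (fun t => vandR p (Function.update x i t)) (x i)
      = ∑ j ∈ Finset.univ.erase i, ∑ k ∈ (Finset.univ.erase i).erase j,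
          (eps i j * eps i k) * (UU p x i j k * wd x j k) := by
    intro i
    rw [deriv2_vand]
    refine Finset.sum_congr rfl fun j hj => Finset.sum_congr rfl fun k hk => ?_
    have hij : i ≠ j := fun h => (Finset.mem_erase.mp hj).1 h.symm
    have hjk : j ≠ k := fun h => (Finset.mem_erase.mp hk).1 h.symm
    have hik : i ≠ k :=
      fun h => ((Finset.mem_erase.mp (Finset.mem_of_mem_erase hk)).1) h.symm
    rw [UU_eq p x hij hik hjk]
  calc ∑ i : Fin p,
        ((x i ^ 2 + a * x i + b)
            * iteratedDeriv 2 (fun t => vandR p (Function.update x i t)) (x i)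
          + (-(2 / 3) * ((p : ℝ) - 2) * x i + c)
            * deriv (fun t => vandR p (Function.update x i t)) (x i))
      = (∑ i : Fin p, ((x i ^ 2 + a * x i + b)
            * ∑ j ∈ Finset.univ.erase i, ∑ k ∈ (Finset.univ.erase i).erase j,
                (eps i j * eps i k) * (UU p x i j k * wd x j k)))
        + ∑ i : Fin p, ((-(2 / 3) * ((p : ℝ) - 2) * x i + c)
            * ∑ j ∈ Finset.univ.erase i, eps i j * BB p x i j) := by
        rw [← Finset.sum_add_distrib]
        exact Finset.sum_congr rfl fun i _ => by rw [hD1 i, hD2 i]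
    _ = ↑(p * (p - 1) * (p - 2)) * vandR p x / 3
        + (↑(p * (p - 1)) * ((-(2 / 3) * ((p : ℝ) - 2)) * vandR p x)) / 2 := by
        rw [triple_part p x a b, pair_part p x (-(2 / 3) * ((p : ℝ) - 2)) c]
    _ = 0 := by
        rcases le_or_gt 2 p with h2 | h2
        · have hc : ((p - 2 : ℕ) : ℝ) = (p : ℝ) - 2 := by
            push_cast [Nat.cast_sub h2]; ring
          rw [Nat.cast_mul (p * (p - 1)) (p - 2), hc]
          ring
        · interval_cases p
          · norm_num [vandR]
end
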